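/- Let k, l be natural numbers and let f : PEquiv (Fin k) (Fin l) be a partial equivalence (a rook diagram). Then there exist a permutation σ of Fin k and a monotone partial equivalence p : PEquiv (Fin k) (Fin l) such that f = σ.toPEquiv.trans p. (Diagrammatically: every rook diagram D has a decomposition D = P ∘ S where S is a permutation diagram and P is a planar rook diagram.) -/

import Mathlib

/-- A rook matrix: every entry is 0 or 1, and there is at most one entry
equal to 1 in each row and in each column. -/
def IsRookMatrix {l k : ℕ} {R : Type*} [CommRing R]
    (A : Matrix (Fin l) (Fin k) R) : Prop :=
  (∀ i j, A i j = 0 ∨ A i j = 1) ∧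
  (∀ i j j', A i j = 1 → A i j' = 1 → j = j') ∧
  (∀ i i' j, A i j = 1 → A i' j = 1 → i = i')

/-- Pseudo-echelon form: if rows `i < i'` contain nonzero entries in columns
`j` and `j'` respectively, then `j < j'`. -/
def IsPseudoEchelon {l k : ℕ} {R : Type*} [CommRing R]
    (A : Matrix (Fin l) (Fin k) R) : Prop :=
  ∀ i i' j j', i < i' → A i j ≠ 0 → A i' j' ≠ 0 → j < j'

/-- A permutation matrix: the 0–1 matrix of some permutation `σ`, with
entry 1 exactly in the positions `(σ j, j)`. -/
def IsPermMatrix {n : ℕ} {R : Type*} [CommRing R]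
    (S : Matrix (Fin n) (Fin n) R) : Prop :=
  ∃ σ : Equiv.Perm (Fin n), ∀ i j, S i j = if i = σ j then 1 else 0

/-- The matrix `[f]` associated to a partial equivalence (rook diagram)
`f : PEquiv (Fin k) (Fin l)`: the `(q, p)` entry is 1 if `f p = q` and 0
otherwise. -/
def rookMatrixOf {k l : ℕ} (R : Type*) [CommRing R]
    (f : PEquiv (Fin k) (Fin l)) : Matrix (Fin l) (Fin k) R :=
  fun q p => if f p = some q then 1 else 0

/-- A partial equivalence (rook diagram) is monotone (planar) if for all
`p, q` in its domain, `p < q` implies `f p < f q`. -/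
def IsMonotonePE {k l : ℕ} (f : PEquiv (Fin k) (Fin l)) : Prop :=
  ∀ p q i j, i ∈ f p → j ∈ f q → p < q → i < j

theorem rook_eq_perm_then_planar {k l : ℕ} (f : PEquiv (Fin k) (Fin l)) :
    ∃ (σ : Equiv.Perm (Fin k)) (p : PEquiv (Fin k) (Fin l)),
      IsMonotonePE p ∧ f = σ.toPEquiv.trans p := by
  classical
  set g : Fin k → ℕ := fun x => (f x).elim (l + x.val) Fin.val with hg
  set τ : Equiv.Perm (Fin k) := Tuple.sort g with hτ
  refine ⟨τ⁻¹, τ.toPEquiv.trans f, ?_, ?_⟩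
  · intro a b i j hi hj hab
    have hfa : f (τ a) = some i := by
      simpa [PEquiv.trans, Option.mem_def, Equiv.toPEquiv] using hi
    have hfb : f (τ b) = some j := by
      simpa [PEquiv.trans, Option.mem_def, Equiv.toPEquiv] using hj
    have hmono := Tuple.monotone_sort g hab.le
    have hga : g (τ a) = i.val := by simp [hg, hfa]
    have hgb : g (τ b) = j.val := by simp [hg, hfb]
    have hle : (i : ℕ) ≤ j := by
      rw [← hga, ← hgb]; exact hmono
    rcases lt_or_eq_of_le hle with h | h
    · exact h
    · exfalso
      have : i = j := Fin.ext h
      subst this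
      have : τ a = τ b := f.inj hfa hfb
      exact absurd (τ.injective this) hab.ne
  · ext x i
    simp [PEquiv.trans, Equiv.toPEquiv, Option.mem_def]
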